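/- Let k be a field of characteristic ≠ 2, (P, ⊥) a poset with an order-reversing involution, and φ a symplectic representation of (P, ⊥) in a finite-dimensional symplectic space (V, ω) over k. Define τ : V × V → V* × V by τ(v, w) = (½ ω̃(v + w), v − w), where ω̃(v) = ω(v, ·) ∈ V*. Then: (a) τ is a linear isomorphism; (b) Ω(τ(v, w), τ(v', w')) = ω(v, v') − ω(w, w') for all v, w, v', w' ∈ V, where Ω((ξ, x), (η, y)) = ξ(y) − η(x) is the canonical symplectic form on V* × V; (c) τ(φ(p) × φ(p)) = (φ(p^⊥))° × φ(p) for every p ∈ P, where ° denotes annihilator. Hence τ is an isomorphism of symplectic representations from φ ⊕ φ̄ on (V × V, ω ⊕ (−ω)) to the symplectification of the underlying linear representation of φ. -/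

import Mathlib

/-- The canonical symplectic form `Ω((ξ, x), (η, y)) = ξ(y) − η(x)` on `V* × V`. -/
noncomputable def OmegaForm (k V : Type*) [Field k] [AddCommGroup V] [Module k V] :
    LinearMap.BilinForm k (Module.Dual k V × V) :=
  ((Module.dualPairing k V).compl₁₂
      (LinearMap.fst k (Module.Dual k V) V) (LinearMap.snd k (Module.Dual k V) V)) -
  ((Module.dualPairing k V).compl₁₂
      (LinearMap.fst k (Module.Dual k V) V) (LinearMap.snd k (Module.Dual k V) V)).flip

/-- The map `τ(v, w) = (½ ω̃(v + w), v − w) : V × V → V* × V`. -/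
noncomputable def tauMap {k V : Type*} [Field k] [AddCommGroup V] [Module k V]
    (ω : LinearMap.BilinForm k V) : V × V →ₗ[k] Module.Dual k V × V :=
  LinearMap.prod
    ((2 : k)⁻¹ • (ω ∘ₗ (LinearMap.fst k V V + LinearMap.snd k V V)))
    (LinearMap.fst k V V - LinearMap.snd k V V)

section Aux

open Module LinearMap

/-- `S.prod T ≃ₗ S × T`. -/
def prodSubmoduleEquiv {k V W : Type*} [Field k] [AddCommGroup V] [Module k V]
    [AddCommGroup W] [Module k W] (S : Submodule k V) (T : Submodule k W) :
    (S.prod T) ≃ₗ[k] S × T where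
  toFun x := (⟨x.1.1, x.2.1⟩, ⟨x.1.2, x.2.2⟩)
  invFun x := ⟨(x.1.1, x.2.1), x.1.2, x.2.2⟩
  map_add' _ _ := rfl
  map_smul' _ _ := rfl
  left_inv _ := rfl
  right_inv _ := rfl

lemma finrank_prod_submodule {k V W : Type*} [Field k] [AddCommGroup V] [Module k V]
    [AddCommGroup W] [Module k W] [FiniteDimensional k V] [FiniteDimensional k W]
    (S : Submodule k V) (T : Submodule k W) :
    finrank k (S.prod T) = finrank k S + finrank k T := by
  rw [(prodSubmoduleEquiv S T).finrank_eq, Module.finrank_prod]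

lemma finrank_dualAnnihilator {k V : Type*} [Field k] [AddCommGroup V] [Module k V]
    [FiniteDimensional k V] (W : Submodule k V) :
    finrank k W.dualAnnihilator = finrank k V - finrank k W := by
  have h := Submodule.finrank_quotient_add_finrank W
  have h2 : finrank k (V ⧸ W) = finrank k W.dualAnnihilator :=
    (Subspace.quotEquivAnnihilator W).finrank_eq
  omega

end Aux

open Module LinearMap in
/-- For a symplectic representation `φ` of a poset with
order-reversing involution `(P, ⊥)` in `(V, ω)` over a field of characteristic `≠ 2`:
(a) `τ` is a linear isomorphism; (b) `Ω(τ(v, w), τ(v', w')) = ω(v, v') − ω(w, w')`;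
(c) `τ(φ(p) × φ(p)) = (φ(p^⊥))° × φ(p)` for every `p`.  Hence `τ` is an isomorphism of
symplectic representations from `φ ⊕ φ̄` onto the symplectification of the underlying
linear representation of `φ`. -/
theorem tau_isomorphism_onto_symplectification
    {k V P : Type*} [Field k] [AddCommGroup V] [Module k V] [FiniteDimensional k V]
    [PartialOrder P] (h2 : (2 : k) ≠ 0)
    (invol : P → P) (hinv : Function.Involutive invol) (hanti : Antitone invol)
    (ω : LinearMap.BilinForm k V) (halt : LinearMap.IsAlt ω)
    (hnd : LinearMap.BilinForm.Nondegenerate ω)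
    (φ : P → Submodule k V) (hmono : Monotone φ)
    (hsymp : ∀ p, φ (invol p) = LinearMap.BilinForm.orthogonal ω.flip (φ p)) :
    Function.Bijective (tauMap ω)
    ∧ (∀ v w v' w' : V,
        OmegaForm k V (tauMap ω (v, w)) (tauMap ω (v', w')) = ω v v' - ω w w')
    ∧ (∀ p, ((φ p).prod (φ p)).map (tauMap ω) =
        ((φ (invol p)).dualAnnihilator).prod (φ p)) := by
  have hneg : ∀ a b : V, ω a b = -ω b a := fun a b => (halt.neg b a).symm
  have hinj : Function.Injective (tauMap ω) := by
    rw [← LinearMap.ker_eq_bot]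
    rw [Submodule.eq_bot_iff]
    rintro ⟨v, w⟩ hvw
    rw [LinearMap.mem_ker] at hvw
    have h1 : (2 : k)⁻¹ • (ω (v + w)) = 0 := congrArg Prod.fst hvw
    have h2' : v - w = 0 := congrArg Prod.snd hvw
    have hvw0 : v + w = 0 := by
      apply hnd.1
      intro n
      have := congrFun (congrArg DFunLike.coe h1) n
      simp only [LinearMap.smul_apply, smul_eq_mul, LinearMap.zero_apply] at this
      have h2inv : (2 : k)⁻¹ ≠ 0 := inv_ne_zero h2
      field_simp at this
      simpa using this
    have hv : v = w := by rwa [sub_eq_zero] at h2'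
    have : (2 : k) • v = 0 := by
      rw [two_smul]; rw [hv] at hvw0 ⊢; exact hvw0
    rcases smul_eq_zero.mp this with h | h
    · exact absurd h h2
    · subst h
      have : w = 0 := by rw [← hv]
      subst this
      rfl
  have hsurj : Function.Surjective (tauMap ω) := by
    have hrank : finrank k (V × V) = finrank k (Module.Dual k V × V) := by
      simp [Module.finrank_prod, Subspace.dual_finrank_eq]
    exact (LinearMap.injective_iff_surjective_of_finrank_eq_finrank hrank).mp hinj
  refine ⟨⟨hinj, hsurj⟩, ?_, ?_⟩
  · intro v w v' w'
    simp only [OmegaForm, tauMap, LinearMap.sub_apply, LinearMap.compl₁₂_apply,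
      LinearMap.fst_apply, LinearMap.snd_apply, LinearMap.flip_apply, LinearMap.prod_apply,
      Function.prod, LinearMap.smul_apply, LinearMap.comp_apply, LinearMap.add_apply,
      map_add, map_sub, smul_eq_mul, Module.dualPairing_apply, LinearMap.smul_apply]
    rw [hneg v' v, hneg v' w, hneg w' v, hneg w' w]
    field_simp
    ring
  · intro p
    have hle : ((φ p).prod (φ p)).map (tauMap ω) ≤
        ((φ (invol p)).dualAnnihilator).prod (φ p) := by
      rintro _ ⟨⟨v, w⟩, ⟨hv, hw⟩, rfl⟩
      refine Submodule.mem_prod.mpr ⟨?_, sub_mem hv hw⟩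
      rw [Submodule.mem_dualAnnihilator]
      · intro u hu
        rw [hsymp p] at hu
        have h1 : ω u v = 0 := (LinearMap.BilinForm.mem_orthogonal_iff.mp hu) v hv
        have h2' : ω u w = 0 := (LinearMap.BilinForm.mem_orthogonal_iff.mp hu) w hw
        show ((2 : k)⁻¹ • (ω ∘ₗ (LinearMap.fst k V V + LinearMap.snd k V V))) (v, w) u = 0
        simp only [LinearMap.smul_apply, LinearMap.comp_apply, LinearMap.add_apply,
          LinearMap.fst_apply, LinearMap.snd_apply, map_add, smul_eq_mul]
        rw [hneg v u, hneg w u, h1, h2']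
        ring
    have d1 : finrank k (((φ p).prod (φ p)).map (tauMap ω)) =
        finrank k (φ p) + finrank k (φ p) := by
      rw [show (tauMap ω : V × V →ₗ[k] Module.Dual k V × V) =
          ((LinearEquiv.ofBijective (tauMap ω) ⟨hinj, hsurj⟩ :
            (V × V) ≃ₗ[k] Module.Dual k V × V) :
            V × V →ₗ[k] Module.Dual k V × V) from rfl,
        LinearEquiv.finrank_map_eq, finrank_prod_submodule]
    have d2 : finrank k (((φ (invol p)).dualAnnihilator).prod (φ p)) =
        finrank k (φ p) + finrank k (φ p) := by
      rw [finrank_prod_submodule, finrank_dualAnnihilator, hsymp p,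
        LinearMap.BilinForm.finrank_orthogonal hnd.flip]
      have h3 := Submodule.finrank_le (φ p)
      have h4 := Submodule.finrank_le (φ (invol p))
      omega
    exact Submodule.eq_of_le_of_finrank_le hle (by omega)
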